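/- Let G ≤ Sym(Ω) be a finite quasiprimitive group whose unique minimal normal subgroup M = Soc G is abelian (type HA), and let E be a transitive G-invariant Cartesian decomposition of Ω that is M-normal. Then for each Γ ∈ E, M^Γ is a regular elementary abelian minimal normal subgroup of G^Γ, the component G^Γ is primitive of affine type, and Soc(G^Γ) = M^Γ; hence E is a blow-up decomposition. -/
import Mathlib


open scoped Pointwise

namespace QP

variable {Ω : Type*}

/-- `P` is a partition of `Ω`. -/
def IsPartition (P : Set (Set Ω)) : Prop :=
  ∅ ∉ P ∧ ∀ ω : Ω, ∃! b : Set Ω, b ∈ P ∧ ω ∈ b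

/-- A proper partition: neither `{Ω}` nor the partition into singletons. -/
def IsProperPartition (P : Set (Set Ω)) : Prop :=
  IsPartition P ∧ P ≠ {Set.univ} ∧ ¬ ∀ b ∈ P, ∃ ω : Ω, b = {ω}

/-- The pointwise stabiliser of the partition `P` (kernel of the action on `P`),
as a subgroup of `Sym(Ω)`: the permutations fixing every block of `P` setwise. -/
def partKernel (P : Set (Set Ω)) : Subgroup (Equiv.Perm Ω) where
  carrier := {g | ∀ b ∈ P, g • b = b}
  one_mem' := by intro b hb; simp
  mul_mem' := by
    intro g h hg hh b hb
    rw [mul_smul, hh b hb, hg b hb]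
  inv_mem' := by
    intro g hg b hb
    rw [inv_smul_eq_iff, hg b hb]

/-- The setwise stabiliser of a partition `P` in `Sym(Ω)`. -/
def partStab (P : Set (Set Ω)) : Subgroup (Equiv.Perm Ω) :=
  MulAction.stabilizer (Equiv.Perm Ω) P

/-- The permutation of the set of blocks of `P` induced by an element of
the stabiliser of `P`. -/
noncomputable def blockPerm (P : Set (Set Ω)) (g : ↥(partStab P)) : Equiv.Perm ↥P where
  toFun b := ⟨(g : Equiv.Perm Ω) • (b : Set Ω), by
    have h1 : (g : Equiv.Perm Ω) • (b : Set Ω) ∈ (g : Equiv.Perm Ω) • P :=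
      Set.smul_mem_smul_set b.2
    rwa [g.2] at h1⟩
  invFun b := ⟨(g : Equiv.Perm Ω)⁻¹ • (b : Set Ω), by
    have h0 : (g : Equiv.Perm Ω) • P = P := g.2
    have h2 : ((g : Equiv.Perm Ω)⁻¹) • P = P := by
      rw [inv_smul_eq_iff, h0]
    have h1 : (g : Equiv.Perm Ω)⁻¹ • (b : Set Ω) ∈ (g : Equiv.Perm Ω)⁻¹ • P :=
      Set.smul_mem_smul_set b.2
    rwa [h2] at h1⟩
  left_inv b := by
    apply Subtype.ext
    simp
  right_inv b := by
    apply Subtype.ext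
    simp

/-- The homomorphism from the stabiliser of a partition `P` to the symmetric
group on the set of blocks of `P`. -/
noncomputable def componentHom (P : Set (Set Ω)) : ↥(partStab P) →* Equiv.Perm ↥P where
  toFun := blockPerm P
  map_one' := by
    apply Equiv.ext; intro b
    apply Subtype.ext
    simp [blockPerm]
  map_mul' := by
    intro g h
    apply Equiv.ext; intro b
    apply Subtype.ext
    simp [blockPerm, mul_smul]

/-- The component `G^P` of `G` on a partition `P` : the permutation group
induced on the set of blocks of `P` by the setwise stabiliser of `P` in `G`. -/
noncomputable def component (G : Subgroup (Equiv.Perm Ω)) (P : Set (Set Ω)) :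
    Subgroup (Equiv.Perm ↥P) :=
  Subgroup.map (componentHom P) (G.subgroupOf (partStab P))

section abstr
variable {X : Type*} [Group X]

/-- `N` is a normal subgroup of the (sub)group `G`. -/
def IsNormalIn (N G : Subgroup X) : Prop :=
  N ≤ G ∧ ∀ g ∈ G, ∀ n ∈ N, g * n * g⁻¹ ∈ N

/-- `N` is a minimal normal subgroup of `G`. -/
def IsMinimalNormalIn (N G : Subgroup X) : Prop :=
  IsNormalIn N G ∧ N ≠ ⊥ ∧
    ∀ K : Subgroup X, IsNormalIn K G → K ≠ ⊥ → K ≤ N → K = N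

/-- The socle of `G`: the subgroup generated by all minimal normal subgroups. -/
def socle (G : Subgroup X) : Subgroup X :=
  ⨆ N ∈ {N : Subgroup X | IsMinimalNormalIn N G}, N

/-- `M` is the internal direct product of the family `N` of subgroups. -/
def IsInternalDirectProductOver {ι : Type*} (M : Subgroup X) (N : ι → Subgroup X) : Prop :=
  (∀ i, N i ≤ M) ∧
  (∀ i j, i ≠ j → ∀ x ∈ N i, ∀ y ∈ N j, Commute x y) ∧
  (⨆ i, N i) = M ∧
  (∀ i, N i ⊓ (⨆ j ∈ ({i}ᶜ : Set ι), N j) = ⊥)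

end abstr

/-- A transitive permutation group on `α`. -/
def IsTransitivePerm {α : Type*} (H : Subgroup (Equiv.Perm α)) : Prop :=
  ∀ a b : α, ∃ g ∈ H, g a = b

/-- A regular permutation group: transitive with trivial point stabilisers. -/
def IsRegularPerm {α : Type*} (H : Subgroup (Equiv.Perm α)) : Prop :=
  IsTransitivePerm H ∧ ∀ g ∈ H, ∀ a : α, g a = a → g = 1

/-- A semiregular permutation group: all point stabilisers are trivial. -/
def IsSemiregularPerm {α : Type*} (H : Subgroup (Equiv.Perm α)) : Prop :=
  ∀ g ∈ H, ∀ a : α, g a = a → g = 1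

/-- A quasiprimitive permutation group: transitive, and every nontrivial
normal subgroup is transitive. -/
def IsQuasiprimitivePerm {α : Type*} (H : Subgroup (Equiv.Perm α)) : Prop :=
  IsTransitivePerm H ∧
    ∀ N : Subgroup (Equiv.Perm α), IsNormalIn N H → N ≠ ⊥ → IsTransitivePerm N

section indexed

variable {ι : Type*}

/-- A Cartesian decomposition, indexed form: a family of pairwise distinct
proper partitions such that any choice of blocks, one from each partition,
intersects in exactly one point. -/
def IsCartesianDecomp (Γ : ι → Set (Set Ω)) : Prop :=
  (∀ i, IsProperPartition (Γ i)) ∧ Function.Injective Γ ∧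
  ∀ c : ι → Set Ω, (∀ i, c i ∈ Γ i) → ∃! ω : Ω, ∀ i, ω ∈ c i

/-- The Cartesian decomposition `Γ` is `M`-normal, with `N i` playing the
role of `M^{Γ i}`: each partition is `M`-invariant, `M` is the internal direct
product of the `N i`, each `N i` acts faithfully on `Γ i`, and
`∏_{j ≠ i} N j` is the kernel of the `M`-action on `Γ i`. -/
structure IsNormalDecomp (M : Subgroup (Equiv.Perm Ω)) (Γ : ι → Set (Set Ω))
    (N : ι → Subgroup (Equiv.Perm Ω)) : Prop where
  invariant : ∀ i, ∀ g ∈ M, ∀ b ∈ Γ i, g • b ∈ Γ i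
  product : IsInternalDirectProductOver M N
  faithful : ∀ i, N i ⊓ partKernel (Γ i) = ⊥
  kernel : ∀ i, M ⊓ partKernel (Γ i) = ⨆ j ∈ ({i}ᶜ : Set ι), N j

end indexed

section setbased

/-- A Cartesian decomposition, as a (finite) set of proper partitions. -/
def IsCartesianDecompSet (E : Set (Set (Set Ω))) : Prop :=
  E.Finite ∧ (∀ P ∈ E, IsProperPartition P) ∧
  ∀ c : Set (Set Ω) → Set Ω, (∀ P ∈ E, c P ∈ P) → ∃! ω : Ω, ∀ P ∈ E, ω ∈ c P

/-- `E` is a homogeneous Cartesian decomposition: all partitions have the same size. -/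
def IsHomogeneous (E : Set (Set (Set Ω))) : Prop :=
  ∀ P ∈ E, ∀ Q ∈ E, Nat.card ↥P = Nat.card ↥Q

/-- `E` is invariant under `G`: `G` permutes the partitions in `E`. -/
def InvariantDec (G : Subgroup (Equiv.Perm Ω)) (E : Set (Set (Set Ω))) : Prop :=
  ∀ g ∈ G, ∀ P ∈ E, g • P ∈ E

/-- `G` is transitive on `E`. -/
def TransitiveOnDec (G : Subgroup (Equiv.Perm Ω)) (E : Set (Set (Set Ω))) : Prop :=
  ∀ P ∈ E, ∀ Q ∈ E, ∃ g ∈ G, g • P = Q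

/-- The Cartesian decomposition `E` is `M`-normal: `M` fixes each partition
in `E` setwise, and `M` is the internal direct product of subgroups `N P`
(`P ∈ E`), where `∏_{Q ≠ P} N Q` is the kernel of the `M`-action on `P`. -/
def IsNormalDecompSet (M : Subgroup (Equiv.Perm Ω)) (E : Set (Set (Set Ω))) : Prop :=
  (∀ g ∈ M, ∀ P ∈ E, g • P = P) ∧
  ∃ N : Set (Set Ω) → Subgroup (Equiv.Perm Ω),
    (∀ P ∈ E, N P ≤ M) ∧
    (∀ P Q, P ∈ E → Q ∈ E → P ≠ Q → ∀ x ∈ N P, ∀ y ∈ N Q, Commute x y) ∧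
    (⨆ P ∈ E, N P) = M ∧
    (∀ P ∈ E, N P ⊓ (⨆ Q ∈ E \ {P}, N Q) = ⊥) ∧
    (∀ P ∈ E, M ⊓ partKernel P = ⨆ Q ∈ E \ {P}, N Q)

/-- `E` is a blow-up decomposition for `G`: a `G`-invariant Cartesian
decomposition on which `G` acts transitively, which is `M`-normal for some
transitive normal subgroup `M` of `G` such that `M^Γ = Soc(G^Γ)` for every
`Γ ∈ E`. -/
def IsBlowUpDecomp (G : Subgroup (Equiv.Perm Ω)) (E : Set (Set (Set Ω))) : Prop :=
  IsCartesianDecompSet E ∧ InvariantDec G E ∧ TransitiveOnDec G E ∧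
  ∃ M : Subgroup (Equiv.Perm Ω), IsNormalIn M G ∧ IsTransitivePerm M ∧
    IsNormalDecompSet M E ∧ ∀ P ∈ E, component M P = socle (component G P)

end setbased

end QP


namespace QP
/-- A primitive permutation group: transitive, with only trivial blocks. -/
def IsPrimitivePerm {α : Type*} (H : Subgroup (Equiv.Perm α)) : Prop :=
  IsTransitivePerm H ∧
    ∀ B : Set α, MulAction.IsBlock ↥H B → B.Subsingleton ∨ B = Set.univ
end QP

namespace QP
variable {Ω : Type*}

lemma mem_partStab' {P : Set (Set Ω)} {g : Equiv.Perm Ω} : g ∈ partStab P ↔ g • P = P := Iff.rfl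

lemma componentHom_coe {P : Set (Set Ω)} (g : ↥(partStab P)) (b : ↥P) :
    ((componentHom P g b : Set Ω)) = (g : Equiv.Perm Ω) • (b : Set Ω) := rfl

lemma componentHom_eq_one_iff {P : Set (Set Ω)} (g : ↥(partStab P)) :
    componentHom P g = 1 ↔ (g : Equiv.Perm Ω) ∈ partKernel P := by
  constructor
  · intro h b hb
    have h2 : componentHom P g ⟨b, hb⟩ = ⟨b, hb⟩ := by rw [h]; rfl
    have h3 := Subtype.ext_iff.mp h2
    simpa [componentHom_coe] using h3
  · intro h
    apply Equiv.ext
    intro b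
    apply Subtype.ext
    show (g : Equiv.Perm Ω) • (b : Set Ω) = (b : Set Ω)
    exact h b b.2

lemma mem_component_iff {H : Subgroup (Equiv.Perm Ω)} {P : Set (Set Ω)} {x : Equiv.Perm ↥P} :
    x ∈ component H P ↔ ∃ (g : Equiv.Perm Ω) (hg : g ∈ partStab P),
      g ∈ H ∧ componentHom P ⟨g, hg⟩ = x := by
  constructor
  · rintro ⟨s, hs, rfl⟩
    exact ⟨(s : Equiv.Perm Ω), s.2, hs, rfl⟩
  · rintro ⟨g, hg, hgH, rfl⟩
    exact ⟨⟨g, hg⟩, hgH, rfl⟩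

/-- Cartesian rigidity: a permutation fixing every block of every partition is 1. -/
lemma eq_one_of_mem_all_kernels {E : Set (Set (Set Ω))} (hcart : IsCartesianDecompSet E)
    {m : Equiv.Perm Ω} (hm : ∀ P ∈ E, m ∈ partKernel P) : m = 1 := by
  apply Equiv.ext
  intro ω
  classical
  set c : Set (Set Ω) → Set Ω := fun P =>
    if h : P ∈ E then (((hcart.2.1 P h).1.2 ω).exists).choose else ∅ with hc
  have hcP : ∀ P ∈ E, c P ∈ P ∧ ω ∈ c P := by
    intro P hP
    simp only [hc, dif_pos hP]
    exact (((hcart.2.1 P hP).1.2 ω).exists).choose_spec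
  obtain ⟨ω', _, huniq⟩ := hcart.2.2 c (fun P hP => (hcP P hP).1)
  have h1 : ω = ω' := huniq ω (fun P hP => (hcP P hP).2)
  have h2 : m ω = ω' := by
    apply huniq
    intro P hP
    have hfix : m • c P = c P := hm P hP (c P) (hcP P hP).1
    have : m ω ∈ m • c P := ⟨ω, (hcP P hP).2, rfl⟩
    rwa [hfix] at this
  exact h2.trans h1.symm

lemma conj_mem_partKernel {P : Set (Set Ω)} {g x : Equiv.Perm Ω} (hx : x ∈ partKernel P) :
    g * x * g⁻¹ ∈ partKernel (g • P) := by
  rintro b ⟨b', hb', rfl⟩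
  show (g * x * g⁻¹) • (g • b') = g • b'
  rw [mul_smul, mul_smul, inv_smul_smul, hx b' hb']

lemma isRegular_of_transitive_comm {α : Type*} {H : Subgroup (Equiv.Perm α)}
    (ht : IsTransitivePerm H) (hc : ∀ x ∈ H, ∀ y ∈ H, x * y = y * x) : IsRegularPerm H := by
  refine ⟨ht, fun g hg a hga => ?_⟩
  apply Equiv.ext
  intro b
  obtain ⟨y, hy, rfl⟩ := ht a b
  show g (y a) = y a
  rw [← Equiv.Perm.mul_apply, hc g hg y hy, Equiv.Perm.mul_apply, hga]

lemma subgroup_ne_bot_iff {G : Type*} [Group G] (H : Subgroup G) :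
    H ≠ ⊥ ↔ ∃ a ∈ H, a ≠ 1 :=
  Subgroup.ne_bot_iff_exists_ne_one.trans
    ⟨fun ⟨a,h⟩ => ⟨a, a.2, fun h' => h (Subtype.ext h')⟩,
     fun ⟨a,ha,h⟩ => ⟨⟨a,ha⟩, fun h' => h (congrArg Subtype.val h')⟩⟩

end QP

namespace QP
variable {Ω : Type*}

/-- An abelian minimal normal subgroup of a finite group has prime exponent. -/
lemma exists_prime_exponent [Finite Ω] {G M : Subgroup (Equiv.Perm Ω)}
    (hM : IsMinimalNormalIn M G)
    (hMab : ∀ x ∈ M, ∀ y ∈ M, x * y = y * x) :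
    ∃ p : ℕ, p.Prime ∧ ∀ x ∈ M, x ^ p = 1 := by
  obtain ⟨m, hmM, hm1⟩ := (subgroup_ne_bot_iff M).mp hM.2.1
  have hord : 1 < orderOf m := by
    have h1 : orderOf m ≠ 1 := fun h1 => hm1 (orderOf_eq_one_iff.mp h1)
    have h0 : 0 < orderOf m := orderOf_pos m
    omega
  set p := (orderOf m).minFac with hp
  have hpprime : p.Prime := Nat.minFac_prime (by omega)
  have hpdvd : p ∣ orderOf m := Nat.minFac_dvd _
  refine ⟨p, hpprime, ?_⟩
  -- the subgroup of elements of order dividing p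
  set K : Subgroup (Equiv.Perm Ω) :=
    { carrier := {x | x ∈ M ∧ x ^ p = 1}
      one_mem' := ⟨M.one_mem, one_pow p⟩
      mul_mem' := by
        rintro x y ⟨hxM, hx⟩ ⟨hyM, hy⟩
        refine ⟨M.mul_mem hxM hyM, ?_⟩
        rw [(Commute.mul_pow (hMab x hxM y hyM) p), hx, hy, one_mul]
      inv_mem' := by
        rintro x ⟨hxM, hx⟩
        exact ⟨M.inv_mem hxM, by rw [inv_pow, hx, inv_one]⟩ } with hK
  have hKM : K ≤ M := fun x hx => hx.1
  have hKnorm : IsNormalIn K G := by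
    refine ⟨hKM.trans hM.1.1, ?_⟩
    rintro g hg n ⟨hnM, hn⟩
    exact ⟨hM.1.2 g hg n hnM, by rw [conj_pow, hn, mul_one, mul_inv_cancel]⟩
  have hKne : K ≠ ⊥ := by
    rw [subgroup_ne_bot_iff]
    refine ⟨m ^ (orderOf m / p), ⟨M.pow_mem hmM _, ?_⟩, ?_⟩
    · rw [← pow_mul, Nat.div_mul_cancel hpdvd, pow_orderOf_eq_one]
    · intro h
      have h1 := orderOf_dvd_of_pow_eq_one h
      have h2 : orderOf m / p < orderOf m := Nat.div_lt_self (by omega) hpprime.one_lt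
      have h3 : 0 < orderOf m / p :=
        Nat.div_pos (Nat.le_of_dvd (by omega) hpdvd) hpprime.pos
      have h4 := Nat.le_of_dvd h3 h1
      exact absurd (Nat.lt_of_le_of_lt h4 h2) (Nat.lt_irrefl _)
  have := hM.2.2 K hKnorm hKne hKM
  intro x hx
  rw [← this] at hx
  exact hx.2

/-- M transitive on Ω and fixing P setwise is transitive on the blocks. -/
lemma component_transitive {M : Subgroup (Equiv.Perm Ω)} {P : Set (Set Ω)}
    (htM : IsTransitivePerm M) (hstab : ∀ m ∈ M, m • P = P) (hpart : IsPartition P) :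
    IsTransitivePerm (component M P) := by
  rintro ⟨b, hb⟩ ⟨b', hb'⟩
  have hbne : b.Nonempty := by
    rcases Set.eq_empty_or_nonempty b with h | h
    · exact absurd (h ▸ hb) hpart.1
    · exact h
  have hbne' : b'.Nonempty := by
    rcases Set.eq_empty_or_nonempty b' with h | h
    · exact absurd (h ▸ hb') hpart.1
    · exact h
  obtain ⟨ω, hω⟩ := hbne
  obtain ⟨ω', hω'⟩ := hbne'
  obtain ⟨g, hgM, hgω⟩ := htM ω ω'
  have hgstab : g ∈ partStab P := hstab g hgM
  refine ⟨componentHom P ⟨g, hgstab⟩, mem_component_iff.mpr ⟨g, hgstab, hgM, rfl⟩, ?_⟩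
  apply Subtype.ext
  show g • b = b'
  have hgbP : g • b ∈ P := by
    have : g • b ∈ g • P := Set.smul_mem_smul_set hb
    rwa [hstab g hgM] at this
  obtain ⟨bu, _, huniq⟩ := hpart.2 ω'
  have h1 : g • b = bu := huniq _ ⟨hgbP, ⟨ω, hω, hgω⟩⟩
  have h2 : b' = bu := huniq _ ⟨hb', hω'⟩
  rw [h1, h2]

/-- The component of an abelian group is abelian. -/
lemma component_comm {M : Subgroup (Equiv.Perm Ω)} {P : Set (Set Ω)}
    (hMab : ∀ x ∈ M, ∀ y ∈ M, x * y = y * x) :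
    ∀ x ∈ component M P, ∀ y ∈ component M P, x * y = y * x := by
  rintro x hx y hy
  obtain ⟨g, hg, hgM, rfl⟩ := mem_component_iff.mp hx
  obtain ⟨g', hg', hg'M, rfl⟩ := mem_component_iff.mp hy
  rw [← map_mul, ← map_mul]
  congr 1
  apply Subtype.ext
  exact hMab g hgM g' hg'M

/-- exponent p passes to components. -/
lemma component_exponent {M : Subgroup (Equiv.Perm Ω)} {P : Set (Set Ω)} {p : ℕ}
    (hexp : ∀ x ∈ M, x ^ p = 1) :
    ∀ x ∈ component M P, x ^ p = 1 := by
  rintro x hx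
  obtain ⟨g, hg, hgM, rfl⟩ := mem_component_iff.mp hx
  rw [← map_pow]
  convert map_one (componentHom P)
  apply Subtype.ext
  show g ^ p = 1
  exact hexp g hgM

/-- Components are monotone. -/
lemma component_mono {M G : Subgroup (Equiv.Perm Ω)} {P : Set (Set Ω)} (h : M ≤ G) :
    component M P ≤ component G P := by
  rintro x hx
  obtain ⟨g, hg, hgM, rfl⟩ := mem_component_iff.mp hx
  exact mem_component_iff.mpr ⟨g, hg, h hgM, rfl⟩

/-- Normality passes to components. -/
lemma component_normal {M G : Subgroup (Equiv.Perm Ω)} {P : Set (Set Ω)}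
    (hnorm : IsNormalIn M G) :
    IsNormalIn (component M P) (component G P) := by
  refine ⟨component_mono hnorm.1, ?_⟩
  rintro x hx n hn
  obtain ⟨g, hg, hgG, rfl⟩ := mem_component_iff.mp hx
  obtain ⟨m, hm, hmM, rfl⟩ := mem_component_iff.mp hn
  have key : componentHom P ⟨g, hg⟩ * componentHom P ⟨m, hm⟩ * (componentHom P ⟨g, hg⟩)⁻¹
      = componentHom P ⟨g * m * g⁻¹, mul_mem (mul_mem hg hm) (inv_mem hg)⟩ := by
    rw [← map_inv, ← map_mul, ← map_mul]
    congr 1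
  rw [key]
  exact mem_component_iff.mpr ⟨g * m * g⁻¹, _, hnorm.2 g hgG m hmM, rfl⟩

end QP

namespace QP

section affine
variable {α : Type*} {A H : Subgroup (Equiv.Perm α)}

/-- A group with a transitive abelian minimal normal subgroup is primitive. -/
lemma primitive_of_abelian_minimal_normal
    (hAH : IsMinimalNormalIn A H) (htA : IsTransitivePerm A)
    (hab : ∀ x ∈ A, ∀ y ∈ A, x * y = y * x) :
    IsPrimitivePerm H := by
  have hAleH : A ≤ H := hAH.1.1
  have htH : IsTransitivePerm H := fun a b => by
    obtain ⟨g, hg, h⟩ := htA a b; exact ⟨g, hAleH hg, h⟩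
  refine ⟨htH, ?_⟩
  intro B hB
  rcases Set.eq_empty_or_nonempty B with hBe | ⟨b₀, hb₀⟩
  · left; rw [hBe]; exact Set.subsingleton_empty
  -- key: an element of H mapping a point of B into B fixes B
  have hfix : ∀ h ∈ H, h b₀ ∈ B → h • B = B := by
    intro h hh hmem
    have hblock := MulAction.isBlock_iff_disjoint_smul_of_ne.mp hB (g := ⟨h, hh⟩)
    by_contra hne
    have hd : Disjoint ((⟨h, hh⟩ : H) • B) B := hblock (fun heq => hne heq)
    have : h b₀ ∈ (⟨h, hh⟩ : H) • B := ⟨b₀, hb₀, rfl⟩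
    exact (Set.disjoint_left.mp hd this) hmem
  set Q : Subgroup (Equiv.Perm α) := A ⊓ MulAction.stabilizer (Equiv.Perm α) B with hQ
  have hQA : Q ≤ A := inf_le_left
  have hQnorm : IsNormalIn Q H := by
    refine ⟨hQA.trans hAleH, ?_⟩
    intro h hh q hq
    obtain ⟨a, haA, ha⟩ := htA b₀ (h b₀)
    set h₀ := a⁻¹ * h with hh₀
    have hh₀H : h₀ ∈ H := mul_mem (inv_mem (hAleH haA)) hh
    have hh₀b₀ : h₀ b₀ = b₀ := by
      show a⁻¹ (h b₀) = b₀
      rw [← ha]; exact a.symm_apply_apply b₀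
    have hh₀B : h₀ • B = B := hfix h₀ hh₀H (by rw [hh₀b₀]; exact hb₀)
    have hr : h₀ * q * h₀⁻¹ ∈ Q := by
      constructor
      · exact hAH.1.2 h₀ hh₀H q (hQA hq)
      · show (h₀ * q * h₀⁻¹) • B = B
        rw [mul_smul, mul_smul, inv_smul_eq_iff.mpr hh₀B.symm]
        rw [hq.2, hh₀B]
    have hconj : h * q * h⁻¹ = a * (h₀ * q * h₀⁻¹) * a⁻¹ := by
      rw [hh₀]; group
    rw [hconj, hab a haA _ (hQA hr), mul_assoc, mul_inv_cancel, mul_one]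
    exact hr
  rcases eq_or_ne Q ⊥ with hQbot | hQne
  · left
    intro b hb b' hb'
    -- both equal b₀
    have key : ∀ x ∈ B, x = b₀ := by
      intro x hx
      obtain ⟨a, haA, ha⟩ := htA b₀ x
      have haQ : a ∈ Q := ⟨haA, hfix a (hAleH haA) (by rw [ha]; exact hx)⟩
      rw [hQbot] at haQ
      rw [Subgroup.mem_bot] at haQ
      rw [← ha, haQ]; rfl
    rw [key b hb, key b' hb']
  · right
    have hQA' : Q = A := hAH.2.2 Q hQnorm hQne hQA
    apply Set.eq_univ_of_forall
    intro x
    obtain ⟨a, haA, ha⟩ := htA b₀ x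
    have haQ : a ∈ Q := hQA' ▸ haA
    have : a • B = B := haQ.2
    rw [← this]
    exact ⟨b₀, hb₀, ha⟩

/-- Any minimal normal subgroup equals the transitive abelian one; the socle is A. -/
lemma socle_eq_of_abelian_minimal_normal
    (hAH : IsMinimalNormalIn A H) (htA : IsTransitivePerm A)
    (hab : ∀ x ∈ A, ∀ y ∈ A, x * y = y * x) :
    socle H = A := by
  have huniq : ∀ N : Subgroup (Equiv.Perm α), IsMinimalNormalIn N H → N = A := by
    intro N hN
    rcases eq_or_ne (N ⊓ A) ⊥ with hbot | hne
    · -- N centralizes A, hence N ≤ A, contradiction with N ⊓ A = ⊥ unless N = ⊥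
      exfalso
      have hcomm : ∀ n ∈ N, ∀ a ∈ A, n * a = a * n := by
        intro n hn a ha
        have h1 : n * a * n⁻¹ * a⁻¹ ∈ A :=
          mul_mem (hAH.1.2 n (hN.1.1 hn) a ha) (inv_mem ha)
        have h2 : n * a * n⁻¹ * a⁻¹ ∈ N := by
          have : a * n⁻¹ * a⁻¹ ∈ N := hN.1.2 a (hAH.1.1 ha) n⁻¹ (inv_mem hn)
          have h3 : n * (a * n⁻¹ * a⁻¹) ∈ N := mul_mem hn this
          convert h3 using 1; group
        have : n * a * n⁻¹ * a⁻¹ ∈ N ⊓ A := ⟨h2, h1⟩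
        rw [hbot, Subgroup.mem_bot] at this
        have := congrArg (fun x => x * a * n) this
        simpa [mul_assoc] using this
      -- get a point
      obtain ⟨n₀, hn₀N, hn₀1⟩ := (subgroup_ne_bot_iff N).mp hN.2.1
      have : ∃ x : α, n₀ x ≠ x := by
        by_contra hc
        push_neg at hc
        exact hn₀1 (Equiv.ext hc)
      obtain ⟨x₀, -⟩ := this
      -- N is contained in A (self-centralizing)
      have hNA : N ≤ A := by
        intro n hn
        obtain ⟨a₀, ha₀A, ha₀⟩ := htA x₀ (n x₀)
        have : n = a₀ := by
          apply Equiv.ext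
          intro y
          obtain ⟨a, haA, ha⟩ := htA x₀ y
          rw [← ha]
          show n (a x₀) = a₀ (a x₀)
          calc n (a x₀) = (n * a) x₀ := rfl
            _ = (a * n) x₀ := by rw [hcomm n hn a haA]
            _ = a (n x₀) := rfl
            _ = a (a₀ x₀) := by rw [ha₀]
            _ = (a * a₀) x₀ := rfl
            _ = (a₀ * a) x₀ := by rw [hab a haA a₀ ha₀A]
            _ = a₀ (a x₀) := rfl
        rw [this]; exact ha₀A
      have : N = A := hAH.2.2 N hN.1 hN.2.1 hNA
      rw [this] at hbot
      simp at hbot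
      rw [hbot] at hAH
      exact hN.2.1 (by rw [this, hbot])
    · have h1 : IsNormalIn (N ⊓ A) H := by
        refine ⟨inf_le_left.trans hN.1.1, ?_⟩
        intro g hg x hx
        exact ⟨hN.1.2 g hg x hx.1, hAH.1.2 g hg x hx.2⟩
      have hN' : N ⊓ A = N := hN.2.2 _ h1 hne inf_le_left
      have hA' : N ⊓ A = A := hAH.2.2 _ h1 hne inf_le_right
      rw [← hN', hA']
  have hset : {N : Subgroup (Equiv.Perm α) | IsMinimalNormalIn N H} = {A} := by
    apply Set.eq_singleton_iff_unique_mem.mpr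
    exact ⟨hAH, huniq⟩
  rw [socle, hset]
  simp

end affine
end QP

namespace QP
variable {Ω : Type*}

lemma exists_ne_blocks {P : Set (Set Ω)} (hP : IsProperPartition P) (ω₀ : Ω) :
    ∃ b ∈ P, ∃ b' ∈ P, b ≠ b' := by
  by_contra hcon
  push_neg at hcon
  obtain ⟨b, ⟨hbP, hωb⟩, -⟩ := hP.1.2 ω₀
  have hbuniv : b = Set.univ := by
    apply Set.eq_univ_of_forall
    intro x
    obtain ⟨bx, ⟨hbxP, hxbx⟩, -⟩ := hP.1.2 x
    rwa [hcon b hbP bx hbxP]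
  refine hP.2.1 ?_
  exact Set.eq_singleton_iff_unique_mem.mpr
    ⟨hbuniv ▸ hbP, fun b' hb' => (hcon b' hb' b hbP).trans hbuniv⟩

/-- The key minimality transfer: `M^P` is a minimal normal subgroup of `G^P`. -/
lemma eq_smul_of_inv_smul_eq {g : Equiv.Perm Ω} {R P : Set (Set Ω)} (h : g⁻¹ • R = P) :
    R = g • P := by rw [← h, smul_inv_smul]

lemma component_M_minimal_aux
    {G M : Subgroup (Equiv.Perm Ω)} {E : Set (Set (Set Ω))}
    (N : Set (Set Ω) → Subgroup (Equiv.Perm Ω))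
    (hNle : ∀ P ∈ E, N P ≤ M)
    (hNsup : (⨆ P ∈ E, N P) = M)
    (hNker : ∀ P ∈ E, M ⊓ partKernel P = ⨆ Q ∈ E \ {P}, N Q)
    (hMfix : ∀ g ∈ M, ∀ P ∈ E, g • P = P)
    (hinv : InvariantDec G E)
    (hM : IsMinimalNormalIn M G)
    (hMab : ∀ x ∈ M, ∀ y ∈ M, x * y = y * x)
    (hcart : IsCartesianDecompSet E)
    {P : Set (Set Ω)} (hPE : P ∈ E)
    (K : Subgroup (Equiv.Perm ↥P))
    (hKnorm : IsNormalIn K (component G P)) (hKne : K ≠ ⊥)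
    (hKle : K ≤ component M P) :
    K = component M P := by
  classical
  have hMstabP : ∀ m ∈ M, m ∈ partStab P := fun m hm =>
    mem_partStab'.mpr (hMfix m hm P hPE)
  -- the canonical complement subgroup
  set bigM : Subgroup (Equiv.Perm Ω) := M ⊓ ⨅ Q ∈ E \ {P}, partKernel Q with hbigM
  have mem_bigM : ∀ x : Equiv.Perm Ω,
      x ∈ bigM ↔ x ∈ M ∧ ∀ Q, Q ∈ E → Q ≠ P → x ∈ partKernel Q := by
    intro x
    simp only [hbigM, Subgroup.mem_inf, Subgroup.mem_iInf, Set.mem_diff,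
      Set.mem_singleton_iff, and_imp]
  have hNPbig : N P ≤ bigM := by
    refine le_inf (hNle P hPE) (le_iInf fun Q => le_iInf fun hQ => ?_)
    have h1 : N P ≤ ⨆ R ∈ E \ {Q}, N R :=
      le_iSup_of_le P (le_iSup_of_le
        ⟨hPE, fun h => hQ.2 (Set.mem_singleton_iff.mpr (Set.mem_singleton_iff.mp h).symm)⟩ le_rfl)
    rw [← hNker Q hQ.1] at h1
    exact h1.trans inf_le_right
  -- decomposition M = bigM * (M ⊓ partKernel P)
  have hdecomp : ∀ m ∈ M, ∃ a ∈ bigM, ∃ w ∈ M ⊓ partKernel P, m = a * w := by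
    set S : Subgroup (Equiv.Perm Ω) :=
      { carrier := {x | ∃ a ∈ bigM, ∃ w ∈ M ⊓ partKernel P, x = a * w}
        one_mem' := ⟨1, one_mem _, 1, one_mem _, (one_mul 1).symm⟩
        mul_mem' := by
          rintro x y ⟨a, ha, w, hw, rfl⟩ ⟨a', ha', w', hw', rfl⟩
          refine ⟨a * a', mul_mem ha ha', w * w', mul_mem hw hw', ?_⟩
          have hcomm : w * a' = a' * w := hMab w hw.1 a' ha'.1
          calc a * w * (a' * w') = a * (w * a') * w' := by group
            _ = a * (a' * w) * w' := by rw [hcomm]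
            _ = a * a' * (w * w') := by group
        inv_mem' := by
          rintro x ⟨a, ha, w, hw, rfl⟩
          refine ⟨a⁻¹, inv_mem ha, w⁻¹, inv_mem hw, ?_⟩
          have hcomm : a⁻¹ * w⁻¹ = w⁻¹ * a⁻¹ := hMab a⁻¹ (inv_mem ha.1) w⁻¹ (inv_mem hw.1)
          rw [mul_inv_rev, hcomm] } with hS
    have hMS : M ≤ S := by
      rw [← hNsup]
      refine iSup_le fun Q => iSup_le fun hQ => ?_
      rcases eq_or_ne Q P with rfl | hQP
      · exact fun x hx => ⟨x, hNPbig hx, 1, one_mem _, (mul_one x).symm⟩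
      · have h1 : N Q ≤ ⨆ R ∈ E \ {P}, N R :=
          le_iSup_of_le Q (le_iSup_of_le ⟨hQ, hQP⟩ le_rfl)
        rw [← hNker P hPE] at h1
        exact fun x hx => ⟨1, one_mem _, x, h1 hx, (one_mul x).symm⟩
    exact fun m hm => hMS hm
  -- surjectivity of bigM onto the component
  have hsurj : ∀ x ∈ component M P, ∃ a, ∃ haM : a ∈ bigM, ∃ h : a ∈ partStab P,
      componentHom P ⟨a, h⟩ = x := by
    intro x hx
    obtain ⟨m, hmstab, hmM, rfl⟩ := mem_component_iff.mp hx
    obtain ⟨a, ha, w, hw, rfl⟩ := hdecomp m hmM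
    have hastab : a ∈ partStab P := hMstabP a ha.1
    have hwstab : w ∈ partStab P := hMstabP w hw.1
    refine ⟨a, ha, hastab, ?_⟩
    have hmk : (⟨a * w, hmstab⟩ : ↥(partStab P)) = ⟨a, hastab⟩ * ⟨w, hwstab⟩ :=
      Subtype.ext rfl
    rw [hmk, map_mul, (componentHom_eq_one_iff ⟨w, hwstab⟩).mpr hw.2, mul_one]
  -- conjugation lemmas
  have hconj_stab : ∀ g ∈ G, g • P = P → ∀ a ∈ bigM, g * a * g⁻¹ ∈ bigM := by
    intro g hg hgP a ha
    rw [mem_bigM] at ha ⊢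
    refine ⟨hM.1.2 g hg a ha.1, ?_⟩
    intro R hR hRP
    have hR' : g⁻¹ • R ∈ E := hinv g⁻¹ (inv_mem hg) R hR
    have hRP' : g⁻¹ • R ≠ P := fun h => hRP ((eq_smul_of_inv_smul_eq h).trans hgP)
    have h1 : a ∈ partKernel (g⁻¹ • R) := ha.2 _ hR' hRP'
    have h2 := conj_mem_partKernel (g := g) h1
    rwa [smul_inv_smul] at h2
  have hconj_move : ∀ g ∈ G, g • P ≠ P → ∀ a ∈ bigM, g * a * g⁻¹ ∈ M ⊓ partKernel P := by
    intro g hg hgP a ha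
    rw [mem_bigM] at ha
    refine ⟨hM.1.2 g hg a ha.1, ?_⟩
    have hP' : g⁻¹ • P ∈ E := hinv g⁻¹ (inv_mem hg) P hPE
    have hPP' : g⁻¹ • P ≠ P := fun h => hgP (eq_smul_of_inv_smul_eq h).symm
    have h1 : a ∈ partKernel (g⁻¹ • P) := ha.2 _ hP' hPP'
    have h2 := conj_mem_partKernel (g := g) h1
    rwa [smul_inv_smul] at h2
  -- the pullback subgroup machinery
  set Vsub : Subgroup (Equiv.Perm Ω) :=
    Subgroup.map (partStab P).subtype (Subgroup.comap (componentHom P) K) with hVsub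
  have hVsub_iff : ∀ (a : Equiv.Perm Ω) (h : a ∈ partStab P),
      (a ∈ Vsub ↔ componentHom P ⟨a, h⟩ ∈ K) := by
    intro a h
    constructor
    · rintro ⟨s, hs, hsa⟩
      have : s = ⟨a, h⟩ := Subtype.ext hsa
      rwa [this] at hs
    · intro hk
      exact ⟨⟨a, h⟩, hk, rfl⟩
  set S : Set (Equiv.Perm Ω) :=
    {x | ∃ g ∈ G, ∃ t ∈ bigM, t ∈ Vsub ∧ x = g * t * g⁻¹} with hSdef
  set V : Subgroup (Equiv.Perm Ω) := M ⊓ Vsub with hV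
  have hSV : S ⊆ (V : Set (Equiv.Perm Ω)) := by
    rintro x ⟨g, hg, t, htbig, htV, rfl⟩
    rw [SetLike.mem_coe]
    have htM : t ∈ M := ((mem_bigM t).mp htbig).1
    by_cases hgP : g • P = P
    · have h1 : g * t * g⁻¹ ∈ bigM := hconj_stab g hg hgP t htbig
      have h1M : g * t * g⁻¹ ∈ M := ((mem_bigM _).mp h1).1
      refine ⟨h1M, ?_⟩
      have hgstab : g ∈ partStab P := mem_partStab'.mpr hgP
      have htstab : t ∈ partStab P := hMstabP t htM
      have hstab : g * t * g⁻¹ ∈ partStab P :=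
        mul_mem (mul_mem hgstab htstab) (inv_mem hgstab)
      show g * t * g⁻¹ ∈ Vsub
      rw [hVsub_iff _ hstab]
      have hmk : (⟨g * t * g⁻¹, hstab⟩ : ↥(partStab P))
          = ⟨g, hgstab⟩ * ⟨t, htstab⟩ * ⟨g, hgstab⟩⁻¹ := Subtype.ext rfl
      rw [hmk, map_mul, map_mul, map_inv]
      refine hKnorm.2 _ ?_ _ ((hVsub_iff t htstab).mp htV)
      exact mem_component_iff.mpr ⟨g, hgstab, hg, rfl⟩
    · have h1 : g * t * g⁻¹ ∈ M ⊓ partKernel P := hconj_move g hg hgP t htbig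
      refine ⟨h1.1, ?_⟩
      have hstab : g * t * g⁻¹ ∈ partStab P := hMstabP _ h1.1
      show g * t * g⁻¹ ∈ Vsub
      rw [hVsub_iff _ hstab, (componentHom_eq_one_iff ⟨_, hstab⟩).mpr h1.2]
      exact one_mem K
  set L : Subgroup (Equiv.Perm Ω) := Subgroup.closure S with hL
  have hLV : L ≤ V := (Subgroup.closure_le V).mpr hSV
  have hLM : L ≤ M := hLV.trans inf_le_left
  have hLnorm : IsNormalIn L G := by
    refine ⟨hLM.trans hM.1.1, ?_⟩
    intro g hg n hn
    have himg : (MulAut.conj g).toMonoidHom '' S ⊆ S := by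
      rintro x ⟨y, ⟨g', hg', t, htbig, htV, rfl⟩, rfl⟩
      refine ⟨g * g', mul_mem hg hg', t, htbig, htV, ?_⟩
      show g * (g' * t * g'⁻¹) * g⁻¹ = g * g' * t * (g * g')⁻¹
      group
    have h1 : Subgroup.map (MulAut.conj g).toMonoidHom L ≤ L := by
      rw [hL, MonoidHom.map_closure]
      exact Subgroup.closure_mono himg |>.trans (le_of_eq rfl)
    have h2 : g * n * g⁻¹ = (MulAut.conj g).toMonoidHom n := rfl
    rw [h2]
    exact h1 ⟨n, hn, rfl⟩
  have hLne : L ≠ ⊥ := by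
    obtain ⟨k, hkK, hk1⟩ := (subgroup_ne_bot_iff K).mp hKne
    obtain ⟨a, haM, hastab, hfa⟩ := hsurj k (hKle hkK)
    have haS : a ∈ S := ⟨1, one_mem G, a, haM, (hVsub_iff a hastab).mpr (hfa ▸ hkK), by group⟩
    have ha1 : a ≠ 1 := by
      rintro rfl
      apply hk1
      rw [← hfa]
      have : (⟨(1 : Equiv.Perm Ω), hastab⟩ : ↥(partStab P)) = 1 := Subtype.ext rfl
      rw [this, map_one]
    exact (subgroup_ne_bot_iff L).mpr ⟨a, Subgroup.subset_closure haS, ha1⟩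
  have hLM' : L = M := hM.2.2 L hLnorm hLne hLM
  -- conclude
  by_contra hKne2
  obtain ⟨y, hyM, hyK⟩ := SetLike.exists_of_lt (lt_of_le_of_ne hKle hKne2)
  obtain ⟨a, haM, hastab, hfa⟩ := hsurj y hyM
  have haL : a ∈ M := ((mem_bigM a).mp haM).1
  rw [← hLM'] at haL
  have haV : a ∈ V := hLV haL
  exact hyK (hfa ▸ (hVsub_iff a hastab).mp haV.2)

end QP

/-- Let G be quasiprimitive with unique minimal normal subgroup
M = Soc G abelian (type HA), and let E be a transitive G-invariant M-normal Cartesian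
decomposition.  Then for each Γ ∈ E the component M^Γ is a regular elementary abelian
minimal normal subgroup of G^Γ, the component G^Γ is primitive with Soc(G^Γ) = M^Γ,
and E is a blow-up decomposition. -/
theorem HA_normal_decomposition_is_blowup
    {Ω : Type*} [Finite Ω]
    (G M : Subgroup (Equiv.Perm Ω)) (E : Set (Set (Set Ω)))
    (hG : QP.IsQuasiprimitivePerm G)
    (hM : QP.IsMinimalNormalIn M G)
    (hMsocle : M = QP.socle G)
    (hMuniq : ∀ K : Subgroup (Equiv.Perm Ω), QP.IsMinimalNormalIn K G → K = M)
    (hMab : ∀ x ∈ M, ∀ y ∈ M, x * y = y * x)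
    (hcart : QP.IsCartesianDecompSet E)
    (hinv : QP.InvariantDec G E)
    (htransE : QP.TransitiveOnDec G E)
    (hMdec : QP.IsNormalDecompSet M E) :
    (∀ P ∈ E,
      QP.IsRegularPerm (QP.component M P) ∧
      (∀ x ∈ QP.component M P, ∀ y ∈ QP.component M P, x * y = y * x) ∧
      (∃ p : ℕ, p.Prime ∧ ∀ x ∈ QP.component M P, x ^ p = 1) ∧
      QP.IsMinimalNormalIn (QP.component M P) (QP.component G P) ∧
      QP.IsPrimitivePerm (QP.component G P) ∧
      QP.socle (QP.component G P) = QP.component M P) ∧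
    QP.IsBlowUpDecomp G E := by
  classical
  have htM : QP.IsTransitivePerm M := hG.2 M hM.1 hM.2.1
  obtain ⟨hMfix, N, hNle, -, hNsup, -, hNker⟩ := id hMdec
  obtain ⟨p, hp, hexp⟩ := QP.exists_prime_exponent hM hMab
  have main : ∀ P ∈ E,
      QP.IsRegularPerm (QP.component M P) ∧
      (∀ x ∈ QP.component M P, ∀ y ∈ QP.component M P, x * y = y * x) ∧
      (∃ p : ℕ, p.Prime ∧ ∀ x ∈ QP.component M P, x ^ p = 1) ∧
      QP.IsMinimalNormalIn (QP.component M P) (QP.component G P) ∧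
      QP.IsPrimitivePerm (QP.component G P) ∧
      QP.socle (QP.component G P) = QP.component M P := by
    intro P hPE
    have htMP : QP.IsTransitivePerm (QP.component M P) :=
      QP.component_transitive htM (fun m hm => hMfix m hm P hPE) (hcart.2.1 P hPE).1
    have hcomm := QP.component_comm (P := P) hMab
    have hreg := QP.isRegular_of_transitive_comm htMP hcomm
    have hΩ : Nonempty Ω := by
      obtain ⟨m, -, hm1⟩ := (QP.subgroup_ne_bot_iff M).mp hM.2.1
      by_contra h
      exact hm1 (Equiv.ext fun x => absurd ⟨x⟩ h)
    obtain ⟨ω₀⟩ := hΩ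
    obtain ⟨b, hb, b', hb', hbb⟩ := QP.exists_ne_blocks (hcart.2.1 P hPE) ω₀
    have hMPne : QP.component M P ≠ ⊥ := by
      obtain ⟨x, hx, hxb⟩ := htMP ⟨b, hb⟩ ⟨b', hb'⟩
      refine (QP.subgroup_ne_bot_iff _).mpr ⟨x, hx, ?_⟩
      intro h1
      rw [h1] at hxb
      simp only [Equiv.Perm.coe_one, id_eq] at hxb
      exact hbb (congrArg Subtype.val hxb)
    have hmin : QP.IsMinimalNormalIn (QP.component M P) (QP.component G P) := by
      refine ⟨QP.component_normal hM.1, hMPne, ?_⟩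
      intro K hK1 hK2 hK3
      exact QP.component_M_minimal_aux N hNle hNsup hNker hMfix hinv hM hMab hcart hPE
        K hK1 hK2 hK3
    have hprim := QP.primitive_of_abelian_minimal_normal hmin htMP hcomm
    have hsoc := QP.socle_eq_of_abelian_minimal_normal hmin htMP hcomm
    exact ⟨hreg, hcomm, ⟨p, hp, QP.component_exponent hexp⟩, hmin, hprim, hsoc⟩
  exact ⟨main, hcart, hinv, htransE, M, hM.1, htM, hMdec,
    fun P hP => (main P hP).2.2.2.2.2.symm⟩
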